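/- arXiv:1704.03734 — 8 statements merged into one kernel-verified Lean document; each statement's English description precedes it below -/
import Mathlib

section
/- Let T be the formal power series with T = z + T^2 and zero constant term. Then the bivariate expression S(z,t) = z + z·t/(1 - t - T^2), after substituting t = z, simplifies to z·(1 + T). Consequently, the number of Catalan–Stanley trees of size n equals 1 for n = 1 and equals the Catalan number C_{n-2} for all n ≥ 2. -/
open PowerSeries

lemma cs_coeff_T (T : PowerSeries ℚ)
    (hT0 : constantCoeff T = 0) (hT : T = X + T ^ 2) :
    ∀ n : ℕ, coeff (n + 1) T = (catalan n : ℚ) := by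
  intro n
  induction n using Nat.strong_induction_on with
  | _ n ih =>
    have hc0 : coeff 0 T = 0 := by simpa using hT0
    nth_rewrite 1 [hT]
    rw [map_add, sq, coeff_mul, Finset.Nat.sum_antidiagonal_eq_sum_range_succ_mk]
    match n with
    | 0 => simp [hc0, Finset.sum_range_succ]
    | n + 1 =>
      rw [coeff_X, if_neg (by omega)]
      rw [Finset.sum_range_succ, Finset.sum_range_succ']
      simp only [Nat.sub_self, hc0, mul_zero, add_zero, Nat.sub_zero, zero_mul, zero_add]
      have : ∀ i ∈ Finset.range (n + 1),
          coeff (i + 1) T * coeff (n + 1 + 1 - (i + 1)) T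
          = (catalan i : ℚ) * (catalan (n - i) : ℚ) := by
        intro i hi
        rw [Finset.mem_range] at hi
        have h1 : coeff (i + 1) T = (catalan i : ℚ) := ih i (by omega)
        have h2 : n + 1 + 1 - (i + 1) = (n - i) + 1 := by omega
        rw [h1, h2, ih (n - i) (by omega)]
      rw [Finset.sum_congr rfl this]
      have hcat := catalan_succ' n
      rw [Finset.Nat.sum_antidiagonal_eq_sum_range_succ_mk] at hcat
      rw [hcat]
      push_cast
      ring

/-- With `T` the formal power series satisfying `T = z + T^2`, `T(0) = 0`,
the series `S(z,t) = z + z·t/(1 - t - T^2)` specialized at `t = z`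
simplifies to `z·(1+T)` (stated with the denominator `1 - z - T^2` cleared).
Consequently the number of Catalan–Stanley trees of size `n`, i.e. the `n`-th
coefficient of `S(z,z) = z·(1+T)`, equals `1` for `n = 1` and equals the
Catalan number `C_{n-2}` for all `n ≥ 2`. -/
theorem catalan_stanley_stmt1 (T : PowerSeries ℚ)
    (hT0 : constantCoeff T = 0) (hT : T = X + T ^ 2) :
    (X + X * T) * (1 - X - T ^ 2) = X * (1 - X - T ^ 2) + X * X ∧
    coeff 1 (X + X * T) = 1 ∧
    ∀ n : ℕ, 2 ≤ n → coeff n (X + X * T) = (catalan (n - 2) : ℚ) := by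
  have hX : (X : PowerSeries ℚ) = T - T ^ 2 := by linear_combination -hT
  have hc0 : coeff 0 T = 0 := by simpa using hT0
  refine ⟨by rw [hX]; ring, ?_, ?_⟩
  · rw [map_add, coeff_X, coeff_mul, Finset.Nat.sum_antidiagonal_eq_sum_range_succ_mk]
    simp [hc0, Finset.sum_range_succ]
  · intro n hn
    have h1 : coeff n (X * T) = coeff (n - 1) T := by
      rw [show n = (n - 1) + 1 from by omega, coeff_succ_X_mul, Nat.add_sub_cancel]
    rw [map_add, coeff_X, if_neg (by omega), h1, zero_add,
      show n - 1 = (n - 2) + 1 from by omega, cs_coeff_T T hT0 hT]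
end

section
/- Define the substitution operator Ψ on bivariate formal power series by Ψ(f)(z,t) = f(z, t·T^2/(1-t)), where T = T(z) satisfies T = z + T^2. Then for every r ≥ 0, the r-fold iterate satisfies Ψ^r(t) = t·T^{2r} / (1 - t·(1 - T^{2r})/(1 - T^2)). -/
open MvPowerSeries

local notation "R" => MvPowerSeries (Fin 2) ℚ
local notation "Z" => (X 0 : R)
local notation "tv" => (X 1 : R)

/-- Let `T` be the formal power series with `T = z + T^2` and zero constant
term, and let `Ψ` be the substitution operator on bivariate formal power
series sending `f(z,t)` to `f(z, t·T^2/(1-t))`, i.e. the ring homomorphism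
fixing `z` (and hence `T`) and sending `t` to `t·T^2/(1-t)` (stated with the
denominator cleared).  Then for every `r ≥ 0` the `r`-fold iterate satisfies
`Ψ^r(t) = t·T^{2r} / (1 - t·(1 - T^{2r})/(1 - T^2))`, stated with
denominators cleared. -/
theorem catalan_stanley_stmt2 (T : R)
    (hT0 : constantCoeff T = 0) (hT : T = Z + T ^ 2)
    (Ψ : R →+* R) (hΨz : Ψ Z = Z) (hΨT : Ψ T = T)
    (hΨt : Ψ tv * (1 - tv) = tv * T ^ 2) (r : ℕ) :
    (⇑Ψ)^[r] tv * ((1 - T ^ 2) - tv * (1 - T ^ (2 * r))) =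
      tv * T ^ (2 * r) * (1 - T ^ 2) := by
  induction r with
  | zero => simp
  | succ n ih =>
    rw [Function.iterate_succ_apply']
    have h2 := congrArg (fun x => Ψ x * (1 - tv)) ih
    simp only [map_mul, map_sub, map_pow, map_one, hΨT] at h2
    linear_combination h2 + (Ψ ((⇑Ψ)^[n] tv) * (1 - T ^ (2 * n)) + T ^ (2 * n) * (1 - T ^ 2)) * hΨt
end

section
/- With Ψ as above (Ψ(t) = t·T^2/(1-t), T = z + T^2), for every r ≥ 1 the product ∏_{j=0}^{r-1} (1 - Ψ^j(t)) equals 1 - t·(1 - T^{2r})/(1 - T^2). -/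
open MvPowerSeries

local notation "R" => MvPowerSeries (Fin 2) ℚ
local notation "Z" => (X 0 : R)
local notation "tv" => (X 1 : R)

/-- With `Ψ` the substitution operator `f(z,t) ↦ f(z, t·T^2/(1-t))` (the ring
homomorphism fixing `z` and `T` and sending `t` to `t·T^2/(1-t)`, stated with
the denominator cleared), where `T = z + T^2` has zero constant term:
for every `r ≥ 1`, the product `∏_{j=0}^{r-1} (1 - Ψ^j(t))` equals
`1 - t·(1 - T^{2r})/(1 - T^2)`, stated with the denominator `1 - T^2`
cleared. -/
theorem catalan_stanley_stmt3 (T : R)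
    (hT0 : (constantCoeff : R →+* ℚ) T = 0) (hT : T = Z + T ^ 2)
    (Ψ : R →+* R) (hΨz : Ψ Z = Z) (hΨT : Ψ T = T)
    (hΨt : Ψ tv * (1 - tv) = tv * T ^ 2) (r : ℕ) (hr : 1 ≤ r) :
    (∏ j ∈ Finset.range r, (1 - (⇑Ψ)^[j] tv)) * (1 - T ^ 2) =
      (1 - T ^ 2) - tv * (1 - T ^ (2 * r)) := by
  clear hr hT0 hT hΨz
  induction r with
  | zero => simp
  | succ n ih =>
    have key : Ψ (∏ j ∈ Finset.range n, (1 - (⇑Ψ)^[j] tv)) =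
        ∏ j ∈ Finset.range n, (1 - (⇑Ψ)^[j + 1] tv) := by
      rw [map_prod]
      exact Finset.prod_congr rfl fun j _ => by
        rw [map_sub, map_one, ← Function.iterate_succ_apply' Ψ j tv]
    have h2 : ∏ j ∈ Finset.range (n + 1), (1 - (⇑Ψ)^[j] tv) =
        (1 - tv) * Ψ (∏ j ∈ Finset.range n, (1 - (⇑Ψ)^[j] tv)) := by
      rw [key, Finset.prod_range_succ', Function.iterate_zero_apply, mul_comm]
    have h3 := congrArg Ψ ih
    simp only [map_mul, map_sub, map_one, map_pow, hΨT] at h3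
    rw [h2]
    linear_combination (1 - tv) * h3 - (1 - T ^ (2 * n)) * hΨt
end

section
/- Let T be the formal power series with T = z + T^2 and zero constant term, let S(z) = z·(1+T), and for r ≥ 1 define F_{r-1}^{≤}(z) = z / (1 - z·(1 - T^{2r-2})/(1 - T^2)). Then S(z) - F_{r-1}^{≤}(z) = z·(1+T)·T^{2r-1}/(1 + T^{2r-1}). -/
open PowerSeries

/-- Let `T` be the formal power series with `T = z + T^2` and zero constant
term, let `S(z) = z·(1+T)` and, for `r ≥ 1`, let `F` be the series
`F_{r-1}^{≤}(z) = z / (1 - z·(1 - T^{2r-2})/(1 - T^2))`, characterized by the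
cleared-denominator equation `F·((1-T^2) - z·(1-T^{2r-2})) = z·(1-T^2)`.
Then `S(z) - F = z·(1+T)·T^{2r-1}/(1 + T^{2r-1})`, stated with the
denominator `1 + T^{2r-1}` cleared. -/
theorem catalan_stanley_stmt4 (r : ℕ) (hr : 1 ≤ r) (T F : PowerSeries ℚ)
    (hT0 : constantCoeff T = 0) (hT : T = X + T ^ 2)
    (hF : F * ((1 - T ^ 2) - X * (1 - T ^ (2 * (r - 1)))) = X * (1 - T ^ 2)) :
    (X * (1 + T) - F) * (1 + T ^ (2 * r - 1)) =
      X * (1 + T) * T ^ (2 * r - 1) := by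
  have hX : (X : PowerSeries ℚ) = T - T ^ 2 := by linear_combination -hT
  have hne : (1 - T : PowerSeries ℚ) ≠ 0 := by
    intro h
    have := congrArg constantCoeff h
    simp [hT0] at this
  have key : (1 - T) * (F * (1 + T ^ (2 * (r - 1)) * T)) =
      (1 - T) * (X * (1 + T)) := by
    linear_combination hF + F * (1 - T ^ (2 * (r - 1))) * hX
  have hK : F * (1 + T ^ (2 * (r - 1)) * T) = X * (1 + T) :=
    mul_left_cancel₀ hne key
  have hm : 2 * r - 1 = 2 * (r - 1) + 1 := by omega
  rw [hm, pow_succ]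
  linear_combination -hK
end

section
/- For integers n ≥ 2 and r ≥ 1, every Catalan–Stanley tree of size n has age at least 1, and its age is at most ⌊n/2⌋. Moreover both bounds are attained: there exists a Catalan–Stanley tree of size n with age 1, and one with age exactly ⌊n/2⌋. -/
inductive PTree : Type
  | node : List PTree → PTree

namespace PTree

/-- number of nodes of a plane tree -/
def size : PTree → ℕ
  | node ts => 1 + (ts.attach.map (fun x => size x.1)).sum
decreasing_by
  have := List.sizeOf_lt_of_mem x.2
  simp only [PTree.node.sizeOf_spec]
  omega

/-- depth of the rightmost leaf of a tree (following last children). -/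
def rdepth : PTree → ℕ
  | node ts => ((ts.attach.map (fun x => 1 + rdepth x.1)).getLast?).getD 0
decreasing_by
  have := List.sizeOf_lt_of_mem x.2
  simp only [PTree.node.sizeOf_spec]
  omega

/-- A Catalan–Stanley tree: the rightmost leaf of every branch attached to
the root has odd distance to the root, i.e. every branch has even `rdepth`. -/
def isCS : PTree → Prop
  | node ts => ∀ t ∈ ts, Even (rdepth t)

/-- The age of a Catalan–Stanley tree: `(M+1)/2`, where `M` is the maximal
depth (distance from the root) of the rightmost leaves of the branches
attached to the root; this is `r` iff `M = 2r-1`, and `0` for the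
single-node tree. -/
def age : PTree → ℕ
  | node ts => ((ts.map (fun t => 1 + rdepth t)).foldr max 0 + 1) / 2

/-- The reduction `ρ` acting on a branch attached to the root whose rightmost
leaf is not a child of the root: the grandparent of the rightmost leaf
(the node at rightmost depth `rdepth - 2`) loses all of its subtrees. -/
def reduceBranch : PTree → PTree
  | node [] => node []
  | node (t :: ts) =>
    if 2 < rdepth (node (t :: ts)) then
      node ((t :: ts).dropLast ++ [reduceBranch ((t :: ts).getLast (by simp))])
    else node []
termination_by t => sizeOf t
decreasing_by
  simp only [node.sizeOf_spec]
  have := List.sizeOf_lt_of_mem (List.getLast_mem (l := t :: ts) (by simp))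
  omega

/-- The reduction `ρ`: rightmost leaves of branches which are children of the
root are deleted (i.e. single-node branches disappear), and in every other
branch the grandparent of its rightmost leaf loses all its subtrees. -/
def reduce : PTree → PTree
  | node ts => node ((ts.filter (fun t => t.size != 1)).map reduceBranch)

end PTree

namespace PTree

lemma size_node (ts : List PTree) : size (node ts) = 1 + (ts.map size).sum := by
  rw [size]; simp

lemma rdepth_node (ts : List PTree) :
    rdepth (node ts) = ((ts.map (fun t => 1 + rdepth t)).getLast?).getD 0 := by
  rw [rdepth]; simp

lemma age_node (ts : List PTree) :
    age (node ts) = ((ts.map (fun t => 1 + rdepth t)).foldr max 0 + 1) / 2 := by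
  rw [age]

lemma rdepth_nil : rdepth (node []) = 0 := by simp [rdepth_node]

lemma rdepth_concat (l : List PTree) (t : PTree) :
    rdepth (node (l ++ [t])) = 1 + rdepth t := by
  rw [rdepth_node]
  simp [List.getLast?_concat]

lemma rdepth_lt_size : ∀ t : PTree, rdepth t < size t
  | node [] => by simp [rdepth_nil, size_node]
  | node (t :: ts) => by
    have hne : (t :: ts) ≠ [] := by simp
    have h := rdepth_lt_size ((t :: ts).getLast hne)
    have hdec : (t :: ts).dropLast ++ [(t :: ts).getLast hne] = t :: ts :=
      List.dropLast_append_getLast hne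
    have h1 : rdepth (node (t :: ts)) = 1 + rdepth ((t :: ts).getLast hne) := by
      conv_lhs => rw [← hdec]
      rw [rdepth_concat]
    have hmem : size ((t :: ts).getLast hne) ≤ ((t :: ts).map size).sum :=
      List.single_le_sum (by simp) _ (List.mem_map_of_mem (List.getLast_mem hne))
    rw [size_node, h1]
    omega
termination_by t => sizeOf t
decreasing_by
  simp only [node.sizeOf_spec]
  have := List.sizeOf_lt_of_mem (List.getLast_mem hne)
  omega

lemma le_foldr_max : ∀ {l : List ℕ} {x : ℕ}, x ∈ l → x ≤ l.foldr max 0 := by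
  intro l
  induction l with
  | nil => intro x h; simp at h
  | cons a l ih =>
    intro x h
    rcases List.mem_cons.mp h with rfl | h'
    · exact le_max_left _ _
    · exact le_trans (ih h') (le_max_right _ _)

lemma foldr_max_mem (l : List ℕ) : l.foldr max 0 = 0 ∨ l.foldr max 0 ∈ l := by
  induction l with
  | nil => simp
  | cons a l ih =>
    simp only [List.foldr_cons]
    rcases le_total a (l.foldr max 0) with h | h
    · rw [max_eq_right h]
      rcases ih with h0 | hm
      · exact Or.inl h0
      · exact Or.inr (List.mem_cons_of_mem _ hm)
    · rw [max_eq_left h]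
      exact Or.inr List.mem_cons_self

def chain : ℕ → PTree
  | 0 => node []
  | k + 1 => node [chain k]

lemma size_chain (k : ℕ) : size (chain k) = k + 1 := by
  induction k with
  | zero => simp [chain, size_node]
  | succ k ih => simp [chain, size_node, ih]; omega

lemma rdepth_chain (k : ℕ) : rdepth (chain k) = k := by
  induction k with
  | zero => simp [chain, rdepth_nil]
  | succ k ih =>
    show rdepth (node ([] ++ [chain k])) = k + 1
    rw [rdepth_concat, ih]; omega

end PTree



open PTree

/-- For `n ≥ 2`, every Catalan–Stanley tree of size `n` has age at least `1`
and at most `⌊n/2⌋`, and both bounds are attained by suitable Catalan–Stanley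
trees of size `n`. -/
theorem catalan_stanley_stmt6 (n : ℕ) (hn : 2 ≤ n) :
    (∀ τ : PTree, τ.isCS → τ.size = n → 1 ≤ τ.age ∧ τ.age ≤ n / 2) ∧
    (∃ τ : PTree, τ.isCS ∧ τ.size = n ∧ τ.age = 1) ∧
    (∃ τ : PTree, τ.isCS ∧ τ.size = n ∧ τ.age = n / 2) := by
  refine ⟨?_, ?_, ?_⟩
  · rintro ⟨ts⟩ hcs hsize
    rw [size_node] at hsize
    rw [age_node]
    set M := (ts.map (fun t => 1 + rdepth t)).foldr max 0 with hM
    have hts : ts ≠ [] := by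
      rintro rfl; simp at hsize; omega
    obtain ⟨t0, ht0⟩ := List.exists_mem_of_ne_nil ts hts
    have hM1 : 1 ≤ M := by
      have h := le_foldr_max (l := ts.map (fun t => 1 + rdepth t)) (x := 1 + rdepth t0)
        (List.mem_map_of_mem ht0)
      omega
    constructor
    · omega
    · rcases foldr_max_mem (ts.map (fun t => 1 + rdepth t)) with h0 | hm
      · omega
      · rw [← hM] at hm
        obtain ⟨t, htmem, hteq⟩ := List.mem_map.mp hm
        obtain ⟨k, hk⟩ := hcs t htmem
        have hlt := rdepth_lt_size t
        have hsum : size t ≤ (ts.map size).sum :=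
          List.single_le_sum (by simp) _ (List.mem_map_of_mem htmem)
        omega
  · refine ⟨node (List.replicate (n - 1) (node [])), ?_, ?_, ?_⟩
    · intro t ht
      rw [List.eq_of_mem_replicate ht, rdepth_nil]
      exact Even.zero
    · rw [size_node]
      simp [size_node]
      omega
    · rw [age_node]
      have : (List.replicate (n - 1) (node [])).map (fun t => 1 + rdepth t)
          = List.replicate (n - 1) 1 := by
        simp [rdepth_nil]
      rw [this]
      have h1 : ∀ k, 1 ≤ k → (List.replicate k 1).foldr max 0 = 1 := by
        intro k hk
        induction k with
        | zero => omega
        | succ k ih =>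
          rcases Nat.eq_zero_or_pos k with rfl | hp
          · simp
          · simp only [List.replicate_succ, List.foldr_cons, ih hp]
            simp
      rw [h1 (n - 1) (by omega)]
  · rcases Nat.even_or_odd n with ⟨r, hr⟩ | ⟨r, hr⟩
    · refine ⟨node [chain (2 * r - 2)], ?_, ?_, ?_⟩
      · intro t ht
        simp only [List.mem_singleton] at ht
        subst ht
        rw [rdepth_chain]
        exact ⟨r - 1, by omega⟩
      · rw [size_node]
        simp [size_chain]
        omega
      · rw [age_node]
        simp only [List.map_cons, List.map_nil, List.foldr_cons, List.foldr_nil,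
          rdepth_chain]
        omega
    · refine ⟨node [node [], chain (2 * r - 2)], ?_, ?_, ?_⟩
      · intro t ht
        simp only [List.mem_cons, List.mem_singleton, List.not_mem_nil, or_false] at ht
        rcases ht with ht | ht
        · subst ht; rw [rdepth_nil]; exact Even.zero
        · subst ht
          rw [rdepth_chain]
          exact ⟨r - 1, by omega⟩
      · rw [size_node]
        simp [size_chain, size_node]
        omega
      · rw [age_node]
        simp only [List.map_cons, List.map_nil, List.foldr_cons, List.foldr_nil,
          rdepth_chain, rdepth_nil]
        have hr1 : 1 ≤ r := by omega
        have : (1 + 0) ⊔ ((1 + (2 * r - 2)) ⊔ 0) = 2 * r - 1 := by omega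
        rw [this]
        omega
end

section
/- Let T be the formal power series with T = z + T^2 and T(0)=0. For fixed n and k, and every r ≥ 0, the identity Φ^r(z^n t^k) = z^n · (t·T^{2r})^k / (1 - t·(1-T^{2r})/(1-T^2))^{k+1} holds, where Φ is the operator defined by Φ(f)(z,t) = (1/(1-t))·f(z, t·T^2/(1-t)). -/
open MvPowerSeries

local notation "R" => MvPowerSeries (Fin 2) ℚ
local notation "Z" => (X 0 : R)
local notation "tv" => (X 1 : R)

/-- Let `T` be the formal power series with `T = z + T^2`, `T(0) = 0`, let `Ψ`
be the substitution operator `f(z,t) ↦ f(z, t·T^2/(1-t))`, i.e. the ring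
homomorphism fixing `z` (and hence `T`) and sending `t` to `t·T^2/(1-t)`
(stated with the denominator cleared), and let `Φ` be the operator
`Φ(f)(z,t) = (1/(1-t))·f(z, t·T^2/(1-t))`, i.e. `Φ(f)·(1-t) = Ψ(f)`.
Then for fixed `n`, `k` and every `r ≥ 0`,
`Φ^r(z^n t^k) = z^n·(t·T^{2r})^k / (1 - t·(1-T^{2r})/(1-T^2))^{k+1}`,
stated with denominators cleared. -/
theorem catalan_stanley_stmt14 (n k : ℕ) (T : R)
    (hT0 : (constantCoeff : R →+* ℚ) T = 0) (hT : T = Z + T ^ 2)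
    (Ψ : R →+* R) (hΨz : Ψ Z = Z) (hΨT : Ψ T = T)
    (hΨt : Ψ tv * (1 - tv) = tv * T ^ 2)
    (Φ : R → R) (hΦ : ∀ f : R, Φ f * (1 - tv) = Ψ f) (r : ℕ) :
    Φ^[r] (Z ^ n * tv ^ k) * ((1 - T ^ 2) - tv * (1 - T ^ (2 * r))) ^ (k + 1) =
      Z ^ n * (tv * T ^ (2 * r)) ^ k * (1 - T ^ 2) ^ (k + 1) := by
  have hu : IsUnit (1 - tv : R) := by
    rw [MvPowerSeries.isUnit_iff_constantCoeff]
    simp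
  induction r with
  | zero =>
    simp
  | succ r ih =>
    rw [Function.iterate_succ_apply']
    set A := Φ^[r] (Z ^ n * tv ^ k) with hA
    have E1 : Ψ A * (((1 - T ^ 2) - Ψ tv * (1 - T ^ (2 * r)))) ^ (k + 1) =
        Z ^ n * (Ψ tv * T ^ (2 * r)) ^ k * (1 - T ^ 2) ^ (k + 1) := by
      have := congrArg Ψ ih
      simpa [map_mul, map_pow, map_sub, map_one, hΨT, hΨz] using this
    have E4 : ((1 - T ^ 2) - Ψ tv * (1 - T ^ (2 * r))) * (1 - tv) =
        (1 - T ^ 2) - tv * (1 - T ^ (2 * (r + 1))) := by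
      linear_combination (T ^ (2 * r) - 1) * hΨt
    apply hu.mul_right_cancel
    calc Φ A * ((1 - T ^ 2) - tv * (1 - T ^ (2 * (r + 1)))) ^ (k + 1) * (1 - tv)
        = (Φ A * (1 - tv)) * ((((1 - T ^ 2) - Ψ tv * (1 - T ^ (2 * r))) * (1 - tv))) ^ (k + 1) := by
          rw [E4]; ring
      _ = (Ψ A * (((1 - T ^ 2) - Ψ tv * (1 - T ^ (2 * r)))) ^ (k + 1)) * (1 - tv) ^ (k + 1) := by
          rw [hΦ A, mul_pow]; ring
      _ = (Z ^ n * (Ψ tv * T ^ (2 * r)) ^ k * (1 - T ^ 2) ^ (k + 1)) * (1 - tv) ^ (k + 1) := by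
          rw [E1]
      _ = Z ^ n * ((Ψ tv * (1 - tv)) * T ^ (2 * r)) ^ k * (1 - T ^ 2) ^ (k + 1) * (1 - tv) := by
          rw [mul_pow (Ψ tv * (1 - tv)) (T ^ (2 * r)) k, mul_pow (Ψ tv) (1 - tv) k,
            mul_pow (Ψ tv) (T ^ (2 * r)) k]; ring
      _ = Z ^ n * ((tv * T ^ 2) * T ^ (2 * r)) ^ k * (1 - T ^ 2) ^ (k + 1) * (1 - tv) := by
          rw [hΨt]
      _ = Z ^ n * (tv * T ^ (2 * (r + 1))) ^ k * (1 - T ^ 2) ^ (k + 1) * (1 - tv) := by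
          ring
end

section
/- Let T be the formal power series with T = z + T^2 and T(0)=0, and let S(z,t) = z + z·t/(1 - t - T^2). Then Φ(S) = S, where Φ(f)(z,t) = (1/(1-t))·f(z, t·T^2/(1-t)). -/
open MvPowerSeries

local notation "R" => MvPowerSeries (Fin 2) ℚ
local notation "Z" => (X 0 : R)
local notation "tv" => (X 1 : R)

/-- Let `T` be the formal power series with `T = z + T^2`, `T(0) = 0`, let
`S(z,t) = z + z·t/(1 - t - T^2)` (characterized by the cleared-denominator
equation `S·(1 - t - T^2) = z·(1 - t - T^2) + z·t`), let `Ψ` be the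
substitution ring homomorphism fixing `z` (and hence `T`) and sending `t` to
`t·T^2/(1-t)` (stated with the denominator cleared), and let `Φ` be the
operator with `Φ(f)·(1-t) = Ψ(f)`, i.e.
`Φ(f)(z,t) = (1/(1-t))·f(z, t·T^2/(1-t))`.  Then `Φ(S) = S`. -/
theorem catalan_stanley_stmt15 (T S : R)
    (hT0 : constantCoeff T = 0) (hT : T = Z + T ^ 2)
    (hS : S * (1 - tv - T ^ 2) = Z * (1 - tv - T ^ 2) + Z * tv)
    (Ψ : R →+* R) (hΨz : Ψ Z = Z) (hΨT : Ψ T = T)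
    (hΨt : Ψ tv * (1 - tv) = tv * T ^ 2)
    (Φ : R → R) (hΦ : ∀ f : R, Φ f * (1 - tv) = Ψ f) :
    Φ S = S := by
  have hΨS : Ψ S * (1 - Ψ tv - T ^ 2) = Z * (1 - Ψ tv - T ^ 2) + Z * Ψ tv := by
    have h := congrArg Ψ hS
    simpa only [map_mul, map_sub, map_add, map_one, map_pow, hΨz, hΨT] using h
  have key : Ψ S * (1 - tv - T ^ 2) = Z * (1 - tv - T ^ 2) + Z * tv * T ^ 2 := by
    linear_combination (1 - tv) * hΨS + Ψ S * hΨt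
  have hfinal : Φ S * ((1 - tv) * (1 - tv - T ^ 2))
      = S * ((1 - tv) * (1 - tv - T ^ 2)) := by
    linear_combination (1 - tv - T ^ 2) * hΦ S + key - (1 - tv) * hS
  have hu : IsUnit ((1 - tv) * ((1 - tv - T ^ 2) : R)) := by
    apply IsUnit.mul <;> rw [MvPowerSeries.isUnit_iff_constantCoeff] <;>
      simp [hT0, constantCoeff_X]
  exact hu.mul_right_cancel hfinal
end

section
/- For integers n ≥ 2, the coefficient [z^n] of the series F_r^≤(z) = z/(1 - z·(1-T^{2r})/(1-T^2)), where T = z + T^2 with T(0)=0, is nonnegative and weakly increasing in r, and for r ≥ ⌊n/2⌋ it equals C_{n-2}. -/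
open PowerSeries Finset

private lemma nn_mul17 {f g : PowerSeries ℚ} (hf : ∀ m, 0 ≤ coeff m f)
    (hg : ∀ m, 0 ≤ coeff m g) : ∀ m, 0 ≤ coeff m (f * g) := by
  intro m
  rw [coeff_mul]
  exact Finset.sum_nonneg fun p _ => mul_nonneg (hf p.1) (hg p.2)

private lemma nn_pow17 {f : PowerSeries ℚ} (hf : ∀ m, 0 ≤ coeff m f) (k : ℕ) :
    ∀ m, 0 ≤ coeff m (f ^ k) := by
  induction k with
  | zero =>
    intro m
    rw [pow_zero, coeff_one]
    split <;> norm_num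
  | succ k ih =>
    rw [pow_succ]
    exact nn_mul17 ih hf

private lemma nn_X17 : ∀ m, 0 ≤ coeff m (X : PowerSeries ℚ) := by
  intro m
  rw [coeff_X]
  split <;> norm_num

/-- For `n ≥ 2`, the coefficient `[z^n]` of the series
`F_r^≤(z) = z/(1 - z·(1-T^{2r})/(1-T^2))` (characterized with denominators
cleared by `F r·((1-T^2) - z·(1-T^{2r})) = z·(1-T^2)`), where `T = z + T^2`
with `T(0) = 0`, is nonnegative, weakly increasing in `r`, and equals the
Catalan number `C_{n-2}` for `r ≥ ⌊n/2⌋`. -/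
theorem catalan_stanley_stmt17 (n : ℕ) (hn : 2 ≤ n) (T : PowerSeries ℚ)
    (hT0 : constantCoeff T = 0) (hT : T = X + T ^ 2)
    (F : ℕ → PowerSeries ℚ)
    (hF : ∀ r : ℕ, F r * ((1 - T ^ 2) - X * (1 - T ^ (2 * r))) = X * (1 - T ^ 2)) :
    (∀ r : ℕ, 0 ≤ coeff n (F r)) ∧
    (∀ r : ℕ, coeff n (F r) ≤ coeff n (F (r + 1))) ∧
    (∀ r : ℕ, n / 2 ≤ r → coeff n (F r) = (catalan (n - 2) : ℚ)) := by
  have hT2 : T ^ 2 = T - X := by linear_combination -hT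
  -- nonnegativity of coefficients of T
  have nnT : ∀ m, 0 ≤ coeff m T := by
    intro m
    induction m using Nat.strong_induction_on with
    | _ m ih =>
      conv_rhs => rw [hT]
      rw [map_add]
      refine add_nonneg (nn_X17 m) ?_
      rw [sq, coeff_mul]
      refine Finset.sum_nonneg ?_
      rintro ⟨i, j⟩ hij
      rw [HasAntidiagonal.mem_antidiagonal] at hij
      rcases Nat.eq_zero_or_pos i with hi | hi
      · subst hi
        simp [coeff_zero_eq_constantCoeff, hT0]
      rcases Nat.eq_zero_or_pos j with hj | hj
      · subst hj
        simp [coeff_zero_eq_constantCoeff, hT0]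
      · exact mul_nonneg (ih i (by omega)) (ih j (by omega))
  -- the geometric partial sums
  set S : ℕ → PowerSeries ℚ := fun r => ∑ i ∈ Finset.range r, (T ^ 2) ^ i with hSdef
  have geom : ∀ r, (1 - T ^ 2) * S r = 1 - T ^ (2 * r) := by
    intro r
    have h := geom_sum_mul (T ^ 2) r
    rw [hSdef]
    linear_combination -h
  have unit_of_cc : ∀ G : PowerSeries ℚ, constantCoeff G = 1 → IsUnit G := by
    intro G h
    rw [isUnit_iff_constantCoeff, h]
    exact isUnit_one
  have u1 : IsUnit (1 - T ^ 2) := by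
    apply unit_of_cc
    simp [hT0]
  have hFX : ∀ r, F r * (1 - X * S r) = X := by
    intro r
    apply u1.mul_left_cancel
    linear_combination hF r - F r * X * geom r
  have hFrec : ∀ r, F r = X + X * (S r * F r) := by
    intro r
    linear_combination hFX r
  have nnS : ∀ r m, 0 ≤ coeff m (S r) := by
    intro r m
    rw [hSdef]
    simp only [map_sum]
    exact Finset.sum_nonneg fun i _ => nn_pow17 (nn_pow17 nnT 2) i m
  have nnF : ∀ r m, 0 ≤ coeff m (F r) := by
    intro r m
    induction m using Nat.strong_induction_on with
    | _ m ih =>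
      conv_rhs => rw [hFrec r]
      rw [map_add]
      refine add_nonneg (nn_X17 m) ?_
      match m with
      | 0 => simp [coeff_zero_eq_constantCoeff, hT0]
      | m + 1 =>
        rw [coeff_succ_X_mul, coeff_mul]
        refine Finset.sum_nonneg ?_
        rintro ⟨i, j⟩ hij
        rw [HasAntidiagonal.mem_antidiagonal] at hij
        exact mul_nonneg (nnS r i) (ih j (by omega))
  have ccF : ∀ r, constantCoeff (F r) = 0 := by
    intro r
    conv_lhs => rw [hFrec r]
    simp
  have uD : ∀ r, IsUnit ((1 - T ^ 2) - X * (1 - T ^ (2 * r))) := by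
    intro r
    apply unit_of_cc
    simp [hT0]
  have hdiff : ∀ r, F (r + 1) - F r = T ^ (2 * r) * (F r * F (r + 1)) := by
    intro r
    apply (uD (r + 1)).mul_right_cancel
    linear_combination (1 - T ^ (2 * r) * F r) * hF (r + 1) - hF r
  -- vanishing of the difference coefficient for large r
  obtain ⟨Q, hQ⟩ : (X : PowerSeries ℚ) ∣ T := X_dvd_iff.mpr hT0
  have hdvdF : ∀ r, (X : PowerSeries ℚ) ∣ F r := fun r => X_dvd_iff.mpr (ccF r)
  have hzero : ∀ r, n / 2 ≤ r → coeff n (T ^ (2 * r) * (F r * F (r + 1))) = 0 := by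
    intro r hr
    have hdvd : (X : PowerSeries ℚ) ^ (2 * r + 2) ∣ T ^ (2 * r) * (F r * F (r + 1)) := by
      have h1 : (X : PowerSeries ℚ) ^ (2 * r) ∣ T ^ (2 * r) :=
        pow_dvd_pow_of_dvd ⟨Q, hQ⟩ _
      have : (X : PowerSeries ℚ) ^ (2 * r + 2) = X ^ (2 * r) * (X * X) := by ring
      rw [this]
      exact mul_dvd_mul h1 (mul_dvd_mul (hdvdF r) (hdvdF (r + 1)))
    exact (X_pow_dvd_iff.mp hdvd) n (by omega)
  have hstab : ∀ r, n / 2 ≤ r → coeff n (F r) = coeff n (F (n / 2)) := by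
    intro r hr
    induction r, hr using Nat.le_induction with
    | base => rfl
    | succ r hr ih =>
      have hc := congrArg (coeff n) (hdiff r)
      rw [map_sub, hzero r hr] at hc
      have : coeff n (F (r + 1)) = coeff n (F r) := by linarith
      rw [this, ih]
  -- the Catalan series B = 1/(1-T)
  set B : PowerSeries ℚ := invOfUnit (1 - T) 1 with hBdef
  have hB1 : (1 - T) * B = 1 := mul_invOfUnit _ 1 (by simp [hT0])
  have uT : IsUnit (1 - T) := unit_of_cc _ (by simp [hT0])
  have hBrec : B = 1 + X * B ^ 2 := by
    apply uT.mul_left_cancel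
    apply uT.mul_left_cancel
    linear_combination ((1 - T) - X * (1 - T) * B - X) * hB1 - hT2
  have catB : ∀ m, coeff m B = (catalan m : ℚ) := by
    intro m
    induction m using Nat.strong_induction_on with
    | _ m ih =>
      match m with
      | 0 =>
        conv_lhs => rw [hBrec]
        simp [coeff_zero_eq_constantCoeff]
      | m + 1 =>
        conv_lhs => rw [hBrec]
        rw [map_add, coeff_one, if_neg (Nat.succ_ne_zero m), coeff_succ_X_mul, sq, coeff_mul,
          catalan_succ']
        push_cast
        rw [zero_add]
        refine Finset.sum_congr rfl ?_
        rintro ⟨i, j⟩ hij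
        rw [HasAntidiagonal.mem_antidiagonal] at hij
        rw [ih i (by omega), ih j (by omega)]
  -- value of coeff n (F n)
  have key : F n * (1 - T) = (X + X ^ 2 * B - X * T ^ (2 * n) * (F n * B)) * (1 - T) := by
    linear_combination hF n + (X * T ^ (2 * n) * F n - X ^ 2) * hB1 + (F n - X) * hT2
  have keyF : F n = X + X ^ 2 * B - X * T ^ (2 * n) * (F n * B) := uT.mul_right_cancel key
  have valFn : coeff n (F n) = (catalan (n - 2) : ℚ) := by
    have hc := congrArg (coeff n) keyF
    rw [map_sub, map_add] at hc
    have h1 : coeff n (X : PowerSeries ℚ) = 0 := by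
      rw [coeff_X, if_neg (by omega)]
    have h2 : coeff n (X ^ 2 * B) = (catalan (n - 2) : ℚ) := by
      have hn' : n = (n - 2) + 2 := by omega
      rw [hn', coeff_X_pow_mul]
      exact catB (n - 2)
    have h3 : coeff n (X * T ^ (2 * n) * (F n * B)) = 0 := by
      have hdvd : (X : PowerSeries ℚ) ^ (2 * n + 1) ∣ X * T ^ (2 * n) * (F n * B) := by
        have : (X : PowerSeries ℚ) ^ (2 * n + 1) = X * X ^ (2 * n) * 1 := by ring
        rw [this]
        exact mul_dvd_mul (mul_dvd_mul dvd_rfl (pow_dvd_pow_of_dvd ⟨Q, hQ⟩ _)) (one_dvd _)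
      exact (X_pow_dvd_iff.mp hdvd) n (by omega)
    rw [h1, h2, h3, zero_add, sub_zero] at hc
    exact hc
  refine ⟨fun r => nnF r n, fun r => ?_, fun r hr => ?_⟩
  · have hc := congrArg (coeff n) (hdiff r)
    rw [map_sub] at hc
    have := nn_mul17 (nn_pow17 nnT (2 * r)) (nn_mul17 (nnF r) (nnF (r + 1))) n
    linarith [hc ▸ this]
  · rw [hstab r hr, ← hstab n (Nat.div_le_self n 2), valFn]
end
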